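/- Along any solution p(t) of the replicator dynamics in a linear congestion game, the potential function Ψ(p) = Σ_i ĉ_i(p) + Σ_{i,γ∈S_i} Σ_{e∈γ}(a_e + b_e) p_{iγ} satisfies dΨ(p(t))/dt = −Σ_i Σ_{γ,γ'∈S_i} p_{iγ}(t) p_{iγ'}(t) (c_{iγ}(p(t)) − c_{iγ'}(p(t)))², which is ≤ 0, with equality at time t if and only if p(t) is a fixed point of the replicator dynamics. -/

import Mathlib

open Filter Topology Finset MeasureTheory

variable {N E : Type} [Fintype N] [DecidableEq N] [Fintype E] [DecidableEq E]
  {S : N → Type} [∀ i, Fintype (S i)] [∀ i, DecidableEq (S i)]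

/-- The load of resource `e` under the pure strategy profile `s`:
the number of players whose chosen strategy uses `e`. -/
def resLoad (strat : ∀ i, S i → Finset E) (s : ∀ i, S i) (e : E) : ℕ :=
  (Finset.univ.filter fun j => e ∈ strat j (s j)).card

/-- The cost of player `i` at the pure profile `s`, with linear resource costs
`c_e(x) = a_e·x + b_e`. -/
def pureCost (strat : ∀ i, S i → Finset E) (a b : E → ℝ) (s : ∀ i, S i) (i : N) : ℝ :=
  ∑ e ∈ strat i (s i), (a e * (resLoad strat s e : ℝ) + b e)

/-- Expected cost `c_{iγ}(p)` of player `i` playing strategy `γ` against the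
mixed profile `p` (expectation over the other players' mixed strategies). -/
def expCost (strat : ∀ i, S i → Finset E) (a b : E → ℝ) (p : ∀ i, S i → ℝ)
    (i : N) (γ : S i) : ℝ :=
  ∑ s : ∀ j, S j,
    if s i = γ then (∏ j ∈ Finset.univ.erase i, p j (s j)) * pureCost strat a b s i
    else 0

/-- Expected cost `ĉ_i(p) = Σ_γ p_{iγ} c_{iγ}(p)` of player `i`. -/
def avgCost (strat : ∀ i, S i → Finset E) (a b : E → ℝ) (p : ∀ i, S i → ℝ)
    (i : N) : ℝ :=
  ∑ γ, p i γ * expCost strat a b p i γ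

/-- Membership in the product of simplices `Δ`. -/
def inSimplex (p : ∀ i, S i → ℝ) : Prop :=
  ∀ i, (∀ γ, 0 ≤ p i γ) ∧ ∑ γ, p i γ = 1

/-- `q` is a fixed point of the replicator dynamics: every strategy played with
positive probability has expected cost equal to the player's average cost. -/
def isFixedPt (strat : ∀ i, S i → Finset E) (a b : E → ℝ) (q : ∀ i, S i → ℝ) : Prop :=
  ∀ i (γ : S i), 0 < q i γ → expCost strat a b q i γ = avgCost strat a b q i

/-- `p : ℝ → Δ` is a solution of the replicator dynamics
`dp_{iγ}/dt = p_{iγ}(ĉ_i(p) - c_{iγ}(p))` on `[0,∞)`, staying in `Δ`. -/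
def isReplicatorSol (strat : ∀ i, S i → Finset E) (a b : E → ℝ)
    (p : ℝ → ∀ i, S i → ℝ) : Prop :=
  (∀ t, 0 ≤ t → inSimplex (p t)) ∧
  ∀ t, 0 ≤ t → ∀ i (γ : S i),
    HasDerivAt (fun τ => p τ i γ)
      (p t i γ * (avgCost strat a b (p t) i - expCost strat a b (p t) i γ)) t

/-- The potential function `Ψ(p) = Σ_i ĉ_i(p) + Σ_{i,γ} Σ_{e∈γ} (a_e + b_e) p_{iγ}`. -/
def potFn (strat : ∀ i, S i → Finset E) (a b : E → ℝ) (p : ∀ i, S i → ℝ) : ℝ :=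
  (∑ i, avgCost strat a b p i) +
    ∑ i, ∑ γ, (∑ e ∈ strat i γ, (a e + b e)) * p i γ

set_option linter.unusedSectionVars false

section Aux

/-- total cost -/
def Wtot (strat : ∀ i, S i → Finset E) (a b : E → ℝ) (s : ∀ i, S i) : ℝ :=
  ∑ i, pureCost strat a b s i

def wlin (strat : ∀ i, S i → Finset E) (a b : E → ℝ) (i : N) (γ : S i) : ℝ :=
  ∑ e ∈ strat i γ, (a e + b e)

def mload (strat : ∀ i, S i → Finset E) (j : N) (s : ∀ i, S i) (e : E) : ℕ :=
  ((Finset.univ.erase j).filter fun k => e ∈ strat k (s k)).card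

def Vres (strat : ∀ i, S i → Finset E) (a b : E → ℝ) (j : N) (s : ∀ i, S i) : ℝ :=
  ∑ e : E, (a e * (mload strat j s e : ℝ) + b e) * (mload strat j s e : ℝ)

lemma resLoad_eq (strat : ∀ i, S i → Finset E) (j : N) (s : ∀ i, S i) (e : E) :
    (resLoad strat s e : ℝ)
      = (mload strat j s e : ℝ) + (if e ∈ strat j (s j) then (1:ℝ) else 0) := by
  have : resLoad strat s e = mload strat j s e + (if e ∈ strat j (s j) then 1 else 0) := by
    unfold resLoad mload
    have huniv : (Finset.univ : Finset N) = insert j (Finset.univ.erase j) := by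
      rw [Finset.insert_erase (Finset.mem_univ j)]
    conv_lhs => rw [huniv, Finset.filter_insert]
    by_cases h : e ∈ strat j (s j)
    · rw [if_pos h, if_pos h, Finset.card_insert_of_notMem (by simp)]
    · rw [if_neg h, if_neg h, add_zero]
  rw [this]; push_cast; split <;> simp

lemma mload_update (strat : ∀ i, S i → Finset E) (j : N) (s : ∀ i, S i) (x : S j) (e : E) :
    mload strat j (Function.update s j x) e = mload strat j s e := by
  unfold mload
  congr 1
  apply Finset.filter_congr
  intro k hk
  rw [Function.update_of_ne (Finset.mem_erase.mp hk).1]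

lemma Vres_update (strat : ∀ i, S i → Finset E) (a b : E → ℝ) (j : N) (s : ∀ i, S i) (x : S j) :
    Vres strat a b j (Function.update s j x) = Vres strat a b j s := by
  unfold Vres
  simp [mload_update]

lemma Wtot_eq (strat : ∀ i, S i → Finset E) (a b : E → ℝ) (s : ∀ i, S i) :
    Wtot strat a b s
      = ∑ e : E, (a e * (resLoad strat s e : ℝ) + b e) * (resLoad strat s e : ℝ) := by
  unfold Wtot pureCost
  have h1 : ∀ i, ∑ e ∈ strat i (s i), (a e * (resLoad strat s e : ℝ) + b e)
      = ∑ e : E, if e ∈ strat i (s i) then (a e * (resLoad strat s e : ℝ) + b e) else 0 := by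
    intro i
    rw [Finset.sum_ite_mem, Finset.univ_inter]
  simp only [h1]
  rw [Finset.sum_comm]
  apply Finset.sum_congr rfl
  intro e _
  rw [← Finset.sum_filter, Finset.sum_const]
  unfold resLoad
  rw [nsmul_eq_mul]
  ring

lemma W_key (strat : ∀ i, S i → Finset E) (a b : E → ℝ) (j : N) (γ : S j)
    (s : ∀ i, S i) (hs : s j = γ) :
    Wtot strat a b s
      = Vres strat a b j s + 2 * pureCost strat a b s j - wlin strat a b j γ := by
  subst hs
  rw [Wtot_eq]
  unfold Vres pureCost wlin
  have h2 : ∑ e ∈ strat j (s j), (a e * (resLoad strat s e : ℝ) + b e)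
      = ∑ e : E, if e ∈ strat j (s j) then (a e * (resLoad strat s e : ℝ) + b e) else 0 := by
    rw [Finset.sum_ite_mem, Finset.univ_inter]
  have h3 : ∑ e ∈ strat j (s j), (a e + b e)
      = ∑ e : E, if e ∈ strat j (s j) then (a e + b e) else 0 := by
    rw [Finset.sum_ite_mem, Finset.univ_inter]
  rw [h2, h3, Finset.mul_sum, ← Finset.sum_add_distrib, ← Finset.sum_sub_distrib]
  apply Finset.sum_congr rfl
  intro e _
  rw [resLoad_eq strat j s e]
  by_cases h : e ∈ strat j (s j)
  · rw [if_pos h, if_pos h, if_pos h]; ring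
  · rw [if_neg h, if_neg h, if_neg h]; ring


lemma split_ind (q : ∀ i, S i → ℝ) (j : N) (γ : S j) (F : (∀ k, S k) → ℝ) :
    ∑ s : ∀ k, S k, (if s j = γ then (∏ k ∈ univ.erase j, q k (s k)) * F s else 0)
      = ∑ f : (∀ k : {k // k ≠ j}, S k.1),
          (∏ k : {k // k ≠ j}, q k.1 (f k)) * F ((Equiv.piSplitAt j S).symm (γ, f)) := by
  rw [← Equiv.sum_comp (Equiv.piSplitAt j S).symm]
  rw [Fintype.sum_prod_type]
  have hcoord : ∀ (x : S j) (f : ∀ k : {k // k ≠ j}, S k.1) (k : N) (hk : k ≠ j),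
      (Equiv.piSplitAt j S).symm (x, f) k = f ⟨k, hk⟩ := by
    intro x f k hk
    simp [Equiv.piSplitAt, dif_neg hk]
  have hj : ∀ (x : S j) (f : ∀ k : {k // k ≠ j}, S k.1),
      (Equiv.piSplitAt j S).symm (x, f) j = x := by
    intro x f; simp [Equiv.piSplitAt]
  have : ∀ (x : S j) (f : ∀ k : {k // k ≠ j}, S k.1),
      (if (Equiv.piSplitAt j S).symm (x, f) j = γ then
        (∏ k ∈ univ.erase j, q k ((Equiv.piSplitAt j S).symm (x, f) k)) *
          F ((Equiv.piSplitAt j S).symm (x, f)) else 0)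
      = (if x = γ then (∏ k : {k // k ≠ j}, q k.1 (f k)) *
          F ((Equiv.piSplitAt j S).symm (γ, f)) else 0) := by
    intro x f
    rw [hj]
    by_cases h : x = γ
    · subst h
      rw [if_pos rfl, if_pos rfl]
      congr 1
      rw [Finset.prod_subtype (p := fun k => k ≠ j) (univ.erase j) (by simp)
        (fun k => q k (((Equiv.piSplitAt j S).symm (x, f)) k))]
      exact Fintype.prod_congr _ _ fun k => by rw [hcoord x f k.1 k.2]
    · rw [if_neg h, if_neg h]
  simp only [this]
  rw [Finset.sum_comm]
  simp [Finset.sum_ite_eq' univ γ]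

lemma split_full (q : ∀ i, S i → ℝ) (j : N) (F : (∀ k, S k) → ℝ) :
    ∑ s : ∀ k, S k, (∏ k, q k (s k)) * F s
      = ∑ x : S j, q j x * ∑ f : (∀ k : {k // k ≠ j}, S k.1),
          (∏ k : {k // k ≠ j}, q k.1 (f k)) * F ((Equiv.piSplitAt j S).symm (x, f)) := by
  rw [← Equiv.sum_comp (Equiv.piSplitAt j S).symm]
  rw [Fintype.sum_prod_type]
  apply Finset.sum_congr rfl
  intro x _
  rw [Finset.mul_sum]
  apply Finset.sum_congr rfl
  intro f _
  have hcoord : ∀ (k : N) (hk : k ≠ j),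
      (Equiv.piSplitAt j S).symm (x, f) k = f ⟨k, hk⟩ := by
    intro k hk; simp [Equiv.piSplitAt, dif_neg hk]
  have hj : (Equiv.piSplitAt j S).symm (x, f) j = x := by simp [Equiv.piSplitAt]
  rw [← mul_assoc]
  congr 1
  rw [← Finset.mul_prod_erase univ _ (Finset.mem_univ j), hj]
  congr 1
  rw [Finset.prod_subtype (p := fun k => k ≠ j) (univ.erase j) (by simp)
    (fun k => q k (((Equiv.piSplitAt j S).symm (x, f)) k))]
  exact Fintype.prod_congr _ _ fun k => by rw [hcoord k.1 k.2]

lemma update_piSplit (j : N) (x γ : S j) (f : ∀ k : {k // k ≠ j}, S k.1) :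
    Function.update ((Equiv.piSplitAt j S).symm (x, f)) j γ
      = (Equiv.piSplitAt j S).symm (γ, f) := by
  funext k
  by_cases h : k = j
  · subst h; simp [Equiv.piSplitAt]
  · rw [Function.update_of_ne h]
    simp [Equiv.piSplitAt, dif_neg h]

lemma sum_ind_one (q : ∀ i, S i → ℝ) (hq1 : ∀ k, ∑ δ, q k δ = 1) (j : N) (γ : S j) :
    ∑ s : ∀ k, S k, (if s j = γ then (∏ k ∈ univ.erase j, q k (s k)) else 0) = 1 := by
  have := split_ind q j γ (fun _ => 1)
  simp only [mul_one] at this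
  rw [this]
  have : ∑ f : (∀ k : {k // k ≠ j}, S k.1), ∏ k : {k // k ≠ j}, q k.1 (f k)
      = ∏ k : {k // k ≠ j}, ∑ δ, q k.1 δ := by
    rw [Finset.prod_univ_sum]
    rw [Fintype.piFinset_univ]
  rw [this]
  simp [hq1]

lemma sum_ind_G (q : ∀ i, S i → ℝ) (hq1 : ∀ k, ∑ δ, q k δ = 1) (j : N) (γ : S j)
    (G : (∀ k, S k) → ℝ) (hG : ∀ s x, G (Function.update s j x) = G s) :
    ∑ s : ∀ k, S k, (if s j = γ then (∏ k ∈ univ.erase j, q k (s k)) * G s else 0)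
      = ∑ s : ∀ k, S k, (∏ k, q k (s k)) * G s := by
  rw [split_ind q j γ G, split_full q j G]
  have key : ∀ (x : S j) (f : ∀ k : {k // k ≠ j}, S k.1),
      G ((Equiv.piSplitAt j S).symm (x, f)) = G ((Equiv.piSplitAt j S).symm (γ, f)) := by
    intro x f
    rw [← update_piSplit j x γ f, hG]
  have : ∀ x : S j, q j x * ∑ f : (∀ k : {k // k ≠ j}, S k.1),
        (∏ k : {k // k ≠ j}, q k.1 (f k)) * G ((Equiv.piSplitAt j S).symm (x, f))
      = q j x * ∑ f : (∀ k : {k // k ≠ j}, S k.1),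
        (∏ k : {k // k ≠ j}, q k.1 (f k)) * G ((Equiv.piSplitAt j S).symm (γ, f)) := by
    intro x
    congr 1
    exact Finset.sum_congr rfl fun f _ => by rw [key x f]
  simp only [this]
  rw [← Finset.sum_mul, hq1 j, one_mul]


lemma avg_as_full (strat : ∀ i, S i → Finset E) (a b : E → ℝ) (q : ∀ i, S i → ℝ) (i : N) :
    avgCost strat a b q i = ∑ s : ∀ k, S k, (∏ k, q k (s k)) * pureCost strat a b s i := by
  unfold avgCost expCost
  simp only [Finset.mul_sum]
  rw [Finset.sum_comm]
  apply Finset.sum_congr rfl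
  intro s _
  have h1 : ∀ γ : S i, q i γ * (if s i = γ then (∏ j ∈ univ.erase i, q j (s j)) * pureCost strat a b s i else 0)
      = if s i = γ then (∏ k, q k (s k)) * pureCost strat a b s i else 0 := by
    intro γ
    by_cases h : s i = γ
    · rw [if_pos h, if_pos h, ← h, ← mul_assoc, Finset.mul_prod_erase univ (fun k => q k (s k)) (Finset.mem_univ i)]
    · rw [if_neg h, if_neg h, mul_zero]
  calc ∑ γ, q i γ * (if s i = γ then (∏ j ∈ univ.erase i, q j (s j)) * pureCost strat a b s i else 0)
      = ∑ γ, if s i = γ then (∏ k, q k (s k)) * pureCost strat a b s i else 0 :=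
        Finset.sum_congr rfl fun γ _ => h1 γ
    _ = (∏ k, q k (s k)) * pureCost strat a b s i := by
        rw [Finset.sum_ite_eq univ (s i)]; simp

lemma potFn_eq (strat : ∀ i, S i → Finset E) (a b : E → ℝ) (q : ∀ i, S i → ℝ) :
    potFn strat a b q
      = ∑ s : ∀ k, S k, (∏ k, q k (s k)) * Wtot strat a b s
        + ∑ i, ∑ γ, wlin strat a b i γ * q i γ := by
  unfold potFn
  congr 1
  · simp only [avg_as_full]
    rw [Finset.sum_comm]
    apply Finset.sum_congr rfl
    intro s _
    rw [Wtot, Finset.mul_sum]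

/-- The replicator velocity. -/
def dvel (strat : ∀ i, S i → Finset E) (a b : E → ℝ) (q : ∀ i, S i → ℝ)
    (i : N) (γ : S i) : ℝ :=
  q i γ * (avgCost strat a b q i - expCost strat a b q i γ)

lemma dvel_sum_zero (strat : ∀ i, S i → Finset E) (a b : E → ℝ) (q : ∀ i, S i → ℝ)
    (j : N) (hq1 : ∑ δ, q j δ = 1) :
    ∑ γ, dvel strat a b q j γ = 0 := by
  unfold dvel
  have : ∀ γ : S j, q j γ * (avgCost strat a b q j - expCost strat a b q j γ)
      = q j γ * avgCost strat a b q j - q j γ * expCost strat a b q j γ :=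
    fun γ => by ring
  rw [Finset.sum_congr rfl fun γ _ => this γ, Finset.sum_sub_distrib, ← Finset.sum_mul, hq1,
    one_mul]
  have : ∑ γ, q j γ * expCost strat a b q j γ = avgCost strat a b q j := rfl
  rw [this, sub_self]

lemma A_eq (strat : ∀ i, S i → Finset E) (a b : E → ℝ) (q : ∀ i, S i → ℝ)
    (hq1 : ∀ k, ∑ δ, q k δ = 1) (j : N) (γ : S j) :
    ∑ s : ∀ k, S k, (if s j = γ then (∏ k ∈ univ.erase j, q k (s k)) * Wtot strat a b s else 0)
      = (∑ s : ∀ k, S k, (∏ k, q k (s k)) * Vres strat a b j s)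
        + 2 * expCost strat a b q j γ - wlin strat a b j γ := by
  have step : ∀ s : ∀ k, S k,
      (if s j = γ then (∏ k ∈ univ.erase j, q k (s k)) * Wtot strat a b s else 0)
      = ((if s j = γ then (∏ k ∈ univ.erase j, q k (s k)) * Vres strat a b j s else 0)
        + 2 * (if s j = γ then (∏ k ∈ univ.erase j, q k (s k)) * pureCost strat a b s j else 0))
        - wlin strat a b j γ * (if s j = γ then (∏ k ∈ univ.erase j, q k (s k)) else 0) := by
    intro s
    by_cases h : s j = γ
    · simp only [if_pos h]
      rw [W_key strat a b j γ s h]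
      ring
    · simp [if_neg h]
  rw [Finset.sum_congr rfl fun s _ => step s, Finset.sum_sub_distrib, Finset.sum_add_distrib,
    ← Finset.mul_sum, ← Finset.mul_sum]
  rw [sum_ind_G q hq1 j γ (Vres strat a b j) (fun s x => Vres_update strat a b j s x)]
  rw [sum_ind_one q hq1 j γ, mul_one]
  have : ∑ s : ∀ k, S k,
      (if s j = γ then (∏ k ∈ univ.erase j, q k (s k)) * pureCost strat a b s j else 0)
      = expCost strat a b q j γ := rfl
  rw [this]

lemma sq_expand {G : Type} [Fintype G] (w c : G → ℝ) (hw : ∑ x, w x = 1) :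
    ∑ x, ∑ y, w x * w y * (c x - c y) ^ 2
      = 2 * (∑ x, w x * c x ^ 2) - 2 * (∑ x, w x * c x) ^ 2 := by
  have inner : ∀ x, ∑ y, w x * w y * (c x - c y) ^ 2
      = (w x * c x ^ 2) * (∑ y, w y) - (2 * (w x * c x)) * (∑ y, w y * c y)
        + w x * (∑ y, w y * c y ^ 2) := by
    intro x
    calc ∑ y, w x * w y * (c x - c y) ^ 2
        = ∑ y, ((w x * c x ^ 2) * w y - (2 * (w x * c x)) * (w y * c y)
            + w x * (w y * c y ^ 2)) := Finset.sum_congr rfl fun y _ => by ring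
      _ = _ := by
          rw [Finset.sum_add_distrib, Finset.sum_sub_distrib, ← Finset.mul_sum,
            ← Finset.mul_sum, ← Finset.mul_sum]
  rw [Finset.sum_congr rfl fun x _ => inner x, hw]
  rw [Finset.sum_add_distrib, Finset.sum_sub_distrib, ← Finset.sum_mul, ← Finset.sum_mul,
    ← Finset.sum_mul]
  have h1 : ∑ x, (2 * (w x * c x)) = 2 * ∑ x, w x * c x := by
    rw [Finset.mul_sum]
  rw [h1, hw]
  ring

lemma dvel_dot (strat : ∀ i, S i → Finset E) (a b : E → ℝ) (q : ∀ i, S i → ℝ)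
    (j : N) :
    ∑ γ, dvel strat a b q j γ * expCost strat a b q j γ
      = (∑ γ, q j γ * expCost strat a b q j γ) ^ 2
        - ∑ γ, q j γ * expCost strat a b q j γ ^ 2 := by
  unfold dvel
  have hav : avgCost strat a b q j = ∑ γ, q j γ * expCost strat a b q j γ := rfl
  calc ∑ γ, q j γ * (avgCost strat a b q j - expCost strat a b q j γ) * expCost strat a b q j γ
      = ∑ γ, ((q j γ * expCost strat a b q j γ) * avgCost strat a b q j
          - q j γ * expCost strat a b q j γ ^ 2) := Finset.sum_congr rfl fun γ _ => by ring
    _ = (∑ γ, q j γ * expCost strat a b q j γ) * avgCost strat a b q j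
          - ∑ γ, q j γ * expCost strat a b q j γ ^ 2 := by
        rw [Finset.sum_sub_distrib, ← Finset.sum_mul]
    _ = _ := by rw [hav]; ring

lemma D_eq (strat : ∀ i, S i → Finset E) (a b : E → ℝ) (q : ∀ i, S i → ℝ)
    (hq : inSimplex q) :
    (∑ s : ∀ k, S k, (∑ j, (∏ k ∈ univ.erase j, q k (s k)) * dvel strat a b q j (s j))
        * Wtot strat a b s)
      + ∑ i, ∑ γ, wlin strat a b i γ * dvel strat a b q i γ
    = -∑ i, ∑ γ, ∑ γ', q i γ * q i γ' *
        (expCost strat a b q i γ - expCost strat a b q i γ') ^ 2 := by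
  have hq1 : ∀ k, ∑ δ, q k δ = 1 := fun k => (hq k).2
  -- Step 1: rewrite first term as a sum over players
  have step1 : (∑ s : ∀ k, S k, (∑ j, (∏ k ∈ univ.erase j, q k (s k)) * dvel strat a b q j (s j))
        * Wtot strat a b s)
      = ∑ j, ∑ γ, dvel strat a b q j γ *
          ∑ s : ∀ k, S k, (if s j = γ then (∏ k ∈ univ.erase j, q k (s k)) * Wtot strat a b s
            else 0) := by
    simp only [Finset.sum_mul]
    rw [Finset.sum_comm]
    apply Finset.sum_congr rfl
    intro j _
    have hterm : ∀ s : ∀ k, S k,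
        (∏ k ∈ univ.erase j, q k (s k)) * dvel strat a b q j (s j) * Wtot strat a b s
        = ∑ γ, (if s j = γ then dvel strat a b q j γ *
            ((∏ k ∈ univ.erase j, q k (s k)) * Wtot strat a b s) else 0) := by
      intro s
      rw [Finset.sum_ite_eq univ (s j)]
      simp only [Finset.mem_univ, if_true]
      ring
    rw [Finset.sum_congr rfl fun s _ => hterm s, Finset.sum_comm]
    apply Finset.sum_congr rfl
    intro γ _
    rw [Finset.mul_sum]
    apply Finset.sum_congr rfl
    intro s _
    by_cases h : s j = γ
    · rw [if_pos h, if_pos h]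
    · rw [if_neg h, if_neg h, mul_zero]
  rw [step1]
  -- Step 2: substitute A_eq and regroup
  have step2 : ∀ j, ∑ γ, dvel strat a b q j γ *
        ∑ s : ∀ k, S k, (if s j = γ then (∏ k ∈ univ.erase j, q k (s k)) * Wtot strat a b s
          else 0)
      = ∑ γ, dvel strat a b q j γ *
          ((∑ s : ∀ k, S k, (∏ k, q k (s k)) * Vres strat a b j s)
            + 2 * expCost strat a b q j γ - wlin strat a b j γ) := by
    intro j
    exact Finset.sum_congr rfl fun γ _ => by rw [A_eq strat a b q hq1 j γ]
  simp only [step2]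
  rw [← Finset.sum_add_distrib, ← Finset.sum_neg_distrib]
  apply Finset.sum_congr rfl
  intro j _
  set K := ∑ s : ∀ k, S k, (∏ k, q k (s k)) * Vres strat a b j s with hK
  have expand : ∀ γ : S j, dvel strat a b q j γ *
        (K + 2 * expCost strat a b q j γ - wlin strat a b j γ)
      = dvel strat a b q j γ * K + 2 * (dvel strat a b q j γ * expCost strat a b q j γ)
        - wlin strat a b j γ * dvel strat a b q j γ := fun γ => by ring
  rw [Finset.sum_congr rfl fun γ _ => expand γ, Finset.sum_sub_distrib,
    Finset.sum_add_distrib, ← Finset.sum_mul, dvel_sum_zero strat a b q j (hq1 j), zero_mul,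
    ← Finset.mul_sum, dvel_dot strat a b q j]
  rw [sq_expand (q j) (expCost strat a b q j) (hq1 j)]
  ring

lemma sum_sq_nonneg (strat : ∀ i, S i → Finset E) (a b : E → ℝ) (q : ∀ i, S i → ℝ)
    (hq : inSimplex q) :
    0 ≤ ∑ i, ∑ γ, ∑ γ', q i γ * q i γ' *
        (expCost strat a b q i γ - expCost strat a b q i γ') ^ 2 := by
  apply Finset.sum_nonneg
  intro i _
  apply Finset.sum_nonneg
  intro γ _
  apply Finset.sum_nonneg
  intro γ' _
  exact mul_nonneg (mul_nonneg ((hq i).1 γ) ((hq i).1 γ')) (sq_nonneg _)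

lemma sum_sq_zero_iff (strat : ∀ i, S i → Finset E) (a b : E → ℝ) (q : ∀ i, S i → ℝ)
    (hq : inSimplex q) :
    (∑ i, ∑ γ, ∑ γ', q i γ * q i γ' *
        (expCost strat a b q i γ - expCost strat a b q i γ') ^ 2) = 0
      ↔ isFixedPt strat a b q := by
  constructor
  · intro hS
    have hterm : ∀ i (γ γ' : S i), q i γ * q i γ' *
        (expCost strat a b q i γ - expCost strat a b q i γ') ^ 2 = 0 := by
      intro i γ γ'
      have h1 := (Finset.sum_eq_zero_iff_of_nonneg (fun i _ => Finset.sum_nonneg fun γ _ =>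
        Finset.sum_nonneg fun γ' _ => mul_nonneg (mul_nonneg ((hq i).1 γ) ((hq i).1 γ'))
          (sq_nonneg _))).mp hS i (Finset.mem_univ i)
      have h2 := (Finset.sum_eq_zero_iff_of_nonneg (fun γ _ => Finset.sum_nonneg fun γ' _ =>
        mul_nonneg (mul_nonneg ((hq i).1 γ) ((hq i).1 γ')) (sq_nonneg _))).mp h1 γ
        (Finset.mem_univ γ)
      exact (Finset.sum_eq_zero_iff_of_nonneg (fun γ' _ =>
        mul_nonneg (mul_nonneg ((hq i).1 γ) ((hq i).1 γ')) (sq_nonneg _))).mp h2 γ'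
        (Finset.mem_univ γ')
    intro i γ hpos
    have hc : ∀ γ' : S i, 0 < q i γ' → expCost strat a b q i γ' = expCost strat a b q i γ := by
      intro γ' hpos'
      have h := hterm i γ γ'
      have hne : q i γ * q i γ' ≠ 0 := ne_of_gt (mul_pos hpos hpos')
      have := (mul_eq_zero.mp h).resolve_left hne
      have := pow_eq_zero_iff (n := 2) (by norm_num) |>.mp this
      linarith [sub_eq_zero.mp this]
    have hav : avgCost strat a b q i = expCost strat a b q i γ := by
      have : ∀ γ' : S i, q i γ' * expCost strat a b q i γ'
          = q i γ' * expCost strat a b q i γ := by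
        intro γ'
        rcases ((hq i).1 γ').eq_or_lt with h | h
        · rw [← h, zero_mul, zero_mul]
        · rw [hc γ' h]
      show (∑ γ', q i γ' * expCost strat a b q i γ') = _
      rw [Finset.sum_congr rfl fun γ' _ => this γ', ← Finset.sum_mul, (hq i).2, one_mul]
    rw [hav]
  · intro hf
    apply Finset.sum_eq_zero
    intro i _
    apply Finset.sum_eq_zero
    intro γ _
    apply Finset.sum_eq_zero
    intro γ' _
    rcases ((hq i).1 γ).eq_or_lt with h | h
    · rw [← h, zero_mul, zero_mul]
    rcases ((hq i).1 γ').eq_or_lt with h' | h'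
    · rw [← h', mul_zero, zero_mul]
    rw [hf i γ h, hf i γ' h', sub_self]
    simp

end Aux

/-- **The potential decreases along replicator trajectories.**
Along any solution `p(t)` of the replicator dynamics in a linear congestion game,
`dΨ(p(t))/dt = -Σ_i Σ_{γ,γ'} p_{iγ} p_{iγ'} (c_{iγ}(p) - c_{iγ'}(p))² ≤ 0`,
with equality at time `t` if and only if `p(t)` is a fixed point of the
replicator dynamics. -/
theorem potential_strictly_decreasing
    (strat : ∀ i, S i → Finset E) (a b : E → ℝ)
    (ha : ∀ e, 0 ≤ a e) (hb : ∀ e, 0 ≤ b e)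
    (hcard : ∀ i, 2 ≤ Fintype.card (S i))
    (p : ℝ → ∀ i, S i → ℝ)
    (hsol : isReplicatorSol strat a b p)
    (t : ℝ) (ht : 0 ≤ t) :
    HasDerivAt (fun τ => potFn strat a b (p τ))
      (-∑ i, ∑ γ, ∑ γ', p t i γ * p t i γ' *
        (expCost strat a b (p t) i γ - expCost strat a b (p t) i γ') ^ 2) t ∧
    (-∑ i, ∑ γ, ∑ γ', p t i γ * p t i γ' *
        (expCost strat a b (p t) i γ - expCost strat a b (p t) i γ') ^ 2) ≤ 0 ∧
    ((-∑ i, ∑ γ, ∑ γ', p t i γ * p t i γ' *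
        (expCost strat a b (p t) i γ - expCost strat a b (p t) i γ') ^ 2) = 0 ↔
      isFixedPt strat a b (p t)) := by
  obtain ⟨hΔ, hode⟩ := hsol
  have hq : inSimplex (p t) := hΔ t ht
  have hd : ∀ i (γ : S i), HasDerivAt (fun τ => p τ i γ) (dvel strat a b (p t) i γ) t :=
    fun i γ => hode t ht i γ
  have hprod : ∀ s : ∀ k, S k,
      HasDerivAt (fun τ => (∏ k, p τ k (s k)) * Wtot strat a b s)
        ((∑ j, (∏ k ∈ univ.erase j, p t k (s k)) * dvel strat a b (p t) j (s j))
          * Wtot strat a b s) t := by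
    intro s
    have h := HasDerivAt.finset_prod (u := (univ : Finset N))
      (f := fun k τ => p τ k (s k)) (f' := fun k => dvel strat a b (p t) k (s k))
      (fun k _ => hd k (s k))
    have h2 := h.mul_const (Wtot strat a b s)
    simpa [smul_eq_mul] using h2
  have hlin : HasDerivAt (fun τ => ∑ i, ∑ γ, wlin strat a b i γ * p τ i γ)
      (∑ i, ∑ γ, wlin strat a b i γ * dvel strat a b (p t) i γ) t :=
    HasDerivAt.fun_sum fun i _ => HasDerivAt.fun_sum fun γ _ => (hd i γ).const_mul _
  have hsum : HasDerivAt (fun τ => ∑ s : ∀ k, S k, (∏ k, p τ k (s k)) * Wtot strat a b s)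
      (∑ s : ∀ k, S k, (∑ j, (∏ k ∈ univ.erase j, p t k (s k)) * dvel strat a b (p t) j (s j))
        * Wtot strat a b s) t :=
    HasDerivAt.fun_sum fun s _ => hprod s
  have hder : HasDerivAt (fun τ => potFn strat a b (p τ))
      ((∑ s : ∀ k, S k, (∑ j, (∏ k ∈ univ.erase j, p t k (s k))
          * dvel strat a b (p t) j (s j)) * Wtot strat a b s)
        + ∑ i, ∑ γ, wlin strat a b i γ * dvel strat a b (p t) i γ) t := by
    have heq : (fun τ => potFn strat a b (p τ))
        = fun τ => (∑ s : ∀ k, S k, (∏ k, p τ k (s k)) * Wtot strat a b s)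
          + ∑ i, ∑ γ, wlin strat a b i γ * p τ i γ :=
      funext fun τ => potFn_eq strat a b (p τ)
    rw [heq]
    exact hsum.add hlin
  have hDeq := D_eq strat a b (p t) hq
  rw [hDeq] at hder
  refine ⟨hder, ?_, ?_⟩
  · exact neg_nonpos.mpr (sum_sq_nonneg strat a b (p t) hq)
  · rw [neg_eq_zero]
    exact sum_sq_zero_iff strat a b (p t) hq
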